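/- The integrand g(z) = Γ_u(ν/2, ν(z+δ)²/(2x²)) · φ(z) is integrable on (−δ, ∞), and ∫_{−δ}^∞ g(z) dz = F_{t_{ν,δ}}(x) − Φ(−δ) for x > 0. -/

import Mathlib

open MeasureTheory ProbabilityTheory Real Set

/-- Standard normal probability density function φ. -/
noncomputable def stdNormalPDF (z : ℝ) : ℝ :=
  (Real.sqrt (2 * Real.pi))⁻¹ * Real.exp (- z ^ 2 / 2)

/-- Standard normal cumulative distribution function Φ. -/
noncomputable def stdNormalCDF (x : ℝ) : ℝ := ∫ z in Set.Iic x, stdNormalPDF z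

/-- Density of the chi-square distribution with ν degrees of freedom. -/
noncomputable def chiSqPDF (ν q : ℝ) : ℝ :=
  if 0 < q then ((1 : ℝ) / 2) ^ (ν / 2) / Real.Gamma (ν / 2) * q ^ (ν / 2 - 1) * Real.exp (- q / 2)
  else 0

/-- CDF of the chi-square distribution with ν degrees of freedom. -/
noncomputable def chiSqCDF (ν q : ℝ) : ℝ := ∫ t in Set.Iic q, chiSqPDF ν t

/-- Upper regularized incomplete gamma function Γ_u(a, x). -/
noncomputable def upperRegGamma (a x : ℝ) : ℝ :=
  (∫ t in Set.Ioi x, Real.exp (-t) * t ^ (a - 1)) / Real.Gamma a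

/-- Lower regularized incomplete gamma function Γ_l(a, x). -/
noncomputable def lowerRegGamma (a x : ℝ) : ℝ := 1 - upperRegGamma a x

/-! ### Auxiliary lemmas -/

lemma integrableOn_gammaIntegrand {a : ℝ} (ha : 0 < a) {u : ℝ} (hu : 0 ≤ u) :
    IntegrableOn (fun t => Real.exp (-t) * t ^ (a - 1)) (Set.Ioi u) := by
  apply (Real.GammaIntegral_convergent ha).mono_set
  intro t ht
  exact lt_of_le_of_lt hu ht

lemma upperRegGamma_nonneg {a : ℝ} (ha : 0 < a) {y : ℝ} (hy : 0 ≤ y) :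
    0 ≤ upperRegGamma a y := by
  apply div_nonneg _ (Real.Gamma_pos_of_pos ha).le
  apply setIntegral_nonneg measurableSet_Ioi
  intro t ht
  have : 0 ≤ t := le_trans hy (le_of_lt ht)
  positivity

lemma upperRegGamma_mono {a : ℝ} (ha : 0 < a) {u v : ℝ} (hu : 0 ≤ u) (huv : u ≤ v) :
    upperRegGamma a v ≤ upperRegGamma a u := by
  apply (div_le_div_iff_of_pos_right (Real.Gamma_pos_of_pos ha)).mpr
  apply setIntegral_mono_set (integrableOn_gammaIntegrand ha hu)
  · filter_upwards [ae_restrict_mem measurableSet_Ioi] with t ht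
    have : 0 ≤ t := le_trans hu (le_of_lt ht)
    positivity
  · exact HasSubset.Subset.eventuallyLE (Ioi_subset_Ioi huv)

lemma upperRegGamma_le_one {a : ℝ} (ha : 0 < a) {y : ℝ} (hy : 0 ≤ y) :
    upperRegGamma a y ≤ 1 := by
  have h0 : upperRegGamma a 0 = 1 := by
    rw [upperRegGamma, ← Real.Gamma_eq_integral ha,
      div_self (Real.Gamma_pos_of_pos ha).ne']
  calc upperRegGamma a y ≤ upperRegGamma a 0 := upperRegGamma_mono ha le_rfl hy
    _ = 1 := h0

lemma antitone_upperRegGamma_max {a : ℝ} (ha : 0 < a) :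
    Antitone (fun y => upperRegGamma a (max y 0)) := by
  intro u v huv
  exact upperRegGamma_mono ha (le_max_right _ _) (max_le_max huv le_rfl)

lemma measurable_upperRegGamma_max {a : ℝ} (ha : 0 < a) :
    Measurable (fun y => upperRegGamma a (max y 0)) :=
  (antitone_upperRegGamma_max ha).measurable

lemma integrableOn_gammaPDFReal {a : ℝ} (ha : 0 < a) (s : Set ℝ) :
    IntegrableOn (gammaPDFReal a (1/2)) s := by
  constructor
  · exact (measurable_gammaPDFReal a (1/2)).aestronglyMeasurable.restrict
  · rw [hasFiniteIntegral_iff_ofReal]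
    · calc ∫⁻ q in s, ENNReal.ofReal (gammaPDFReal a (1/2) q)
          ≤ ∫⁻ q, ENNReal.ofReal (gammaPDFReal a (1/2) q) := setLIntegral_le_lintegral _ _
        _ = 1 := lintegral_gammaPDF_eq_one ha (by norm_num)
        _ < ⊤ := ENNReal.one_lt_top
    · exact ae_of_all _ (gammaPDFReal_nonneg ha (by norm_num))

lemma gammaMeasure_tail {a : ℝ} (ha : 0 < a) {c : ℝ} (hc : 0 < c) :
    gammaMeasure a (1/2) (Set.Ici c) = ENNReal.ofReal (upperRegGamma a (c/2)) := by
  rw [gammaMeasure, withDensity_apply _ measurableSet_Ici]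
  rw [show (fun q => gammaPDF a (1/2) q) = fun q => ENNReal.ofReal (gammaPDFReal a (1/2) q) from rfl]
  rw [← ofReal_integral_eq_lintegral_ofReal
        ((integrableOn_gammaPDFReal ha _))
        (ae_of_all _ (gammaPDFReal_nonneg ha (by norm_num)))]
  congr 1
  rw [integral_Ici_eq_integral_Ioi]
  have key : ∀ t ∈ Set.Ioi c, gammaPDFReal a (1/2) t
      = ((1/2:ℝ) ^ a / Real.Gamma a * (2:ℝ) ^ (a-1) * 2) * (2⁻¹ * (Real.exp (-((1/2)*t)) * ((1/2)*t) ^ (a-1))) := by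
    intro t ht
    have ht0 : (0:ℝ) < t := hc.trans ht
    rw [gammaPDFReal, if_pos ht0.le]
    have : ((1/2:ℝ)*t) ^ (a-1) = (1/2:ℝ)^(a-1) * t^(a-1) :=
      Real.mul_rpow (by norm_num) ht0.le
    rw [this]
    have h2 : (2:ℝ) ^ (a-1) * (1/2:ℝ)^(a-1) = 1 := by
      rw [← Real.mul_rpow (by norm_num) (by norm_num)]
      norm_num
    have expand : ((1/2:ℝ) ^ a / Real.Gamma a * (2:ℝ) ^ (a-1) * 2)
        * (2⁻¹ * (Real.exp (-((1/2)*t)) * ((1/2:ℝ)^(a-1) * t^(a-1))))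
        = ((2:ℝ)^(a-1) * (1/2:ℝ)^(a-1))
          * ((1/2:ℝ)^a / Real.Gamma a * t^(a-1) * Real.exp (-((1/2)*t))) := by ring
    rw [expand, h2, one_mul]
  rw [setIntegral_congr_fun measurableSet_Ioi key]
  rw [integral_const_mul, integral_const_mul]
  have sub := MeasureTheory.integral_comp_mul_left_Ioi
    (fun s => Real.exp (-s) * s ^ (a-1)) c (show (0:ℝ) < 1/2 by norm_num)
  simp only [smul_eq_mul] at sub
  rw [sub, upperRegGamma]
  have h2 : (1/2:ℝ) ^ a * ((2:ℝ) ^ (a-1) * 2) = 1 := by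
    rw [show ((2:ℝ)^(a-1) * 2) = (2:ℝ) ^ ((a-1)+1) from (Real.rpow_add_one (by norm_num) _).symm]
    rw [sub_add_cancel, ← Real.mul_rpow (by norm_num) (by norm_num)]
    norm_num
  have : (1/2:ℝ) * c = c/2 := by ring
  rw [this]
  rw [show (1/2:ℝ)^a / Real.Gamma a * (2:ℝ)^(a-1) * 2 *
        (2⁻¹ * ((1/2:ℝ)⁻¹ * ∫ s in Set.Ioi (c/2), Real.exp (-s) * s ^ (a-1)))
      = ((1/2:ℝ)^a * ((2:ℝ)^(a-1) * 2))
        * ((∫ s in Set.Ioi (c/2), Real.exp (-s) * s ^ (a-1)) / Real.Gamma a) by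
    ring]
  rw [h2, one_mul]

lemma gammaMeasure_Iic_zero {a : ℝ} : gammaMeasure a (1/2) (Set.Iic 0) = 0 := by
  rw [gammaMeasure, withDensity_apply _ measurableSet_Iic]
  rw [MeasureTheory.Measure.restrict_congr_set MeasureTheory.Iio_ae_eq_Iic.symm]
  exact lintegral_gammaPDF_of_nonpos le_rfl

lemma slice_eq_of_gt {ν δ x z : ℝ} (hν : 0 < ν) (hx : 0 < x) (hz : -δ < z) :
    {q : ℝ | (z + δ) / Real.sqrt (q / ν) ≤ x}
      = Set.Iic 0 ∪ Set.Ici (ν * (z + δ) ^ 2 / x ^ 2) := by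
  have hzd : 0 < z + δ := by linarith
  ext q
  simp only [mem_setOf_eq, mem_union, mem_Iic, mem_Ici]
  rcases le_or_gt q 0 with hq | hq
  · simp only [hq, true_or, iff_true]
    have : Real.sqrt (q / ν) = 0 := by
      rw [Real.sqrt_eq_zero']
      exact div_nonpos_of_nonpos_of_nonneg hq hν.le
    rw [this, div_zero]
    exact hx.le
  · have hs : 0 < Real.sqrt (q / ν) := Real.sqrt_pos.mpr (div_pos hq hν)
    rw [div_le_iff₀ hs]
    constructor
    · intro h
      right
      have h1 : (z + δ) / x ≤ Real.sqrt (q / ν) := by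
        rw [div_le_iff₀ hx]; linarith [mul_comm x (Real.sqrt (q/ν))]
      have h2 : ((z + δ) / x) ^ 2 ≤ q / ν := (Real.le_sqrt' (div_pos hzd hx)).mp h1
      rw [div_pow, div_le_div_iff₀ (by positivity) hν] at h2
      rw [div_le_iff₀ (by positivity)]
      nlinarith
    · intro h
      rcases h with h | h
      · linarith
      · have h2 : ((z + δ) / x) ^ 2 ≤ q / ν := by
          rw [div_pow, div_le_div_iff₀ (by positivity) hν]
          rw [div_le_iff₀ (by positivity)] at h
          nlinarith
        have h1 : (z + δ) / x ≤ Real.sqrt (q / ν) := (Real.le_sqrt' (div_pos hzd hx)).mpr h2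
        rw [div_le_iff₀ hx] at h1
        linarith [mul_comm (Real.sqrt (q/ν)) x]

lemma slice_eq_of_le {ν δ x z : ℝ} (hx : 0 < x) (hz : z ≤ -δ) :
    {q : ℝ | (z + δ) / Real.sqrt (q / ν) ≤ x} = Set.univ := by
  ext q
  simp only [mem_setOf_eq, mem_univ, iff_true]
  have hzd : z + δ ≤ 0 := by linarith
  rcases eq_or_lt_of_le (Real.sqrt_nonneg (q / ν)) with hs | hs
  · rw [← hs, div_zero]; exact hx.le
  · exact le_trans (div_nonpos_of_nonpos_of_nonneg hzd (le_of_lt hs)) hx.le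

lemma stdNormalPDF_eq_gaussianPDFReal : stdNormalPDF = gaussianPDFReal 0 1 := by
  ext z
  simp only [stdNormalPDF, gaussianPDFReal, NNReal.coe_one, mul_one, sub_zero]

lemma stdNormalPDF_nonneg (z : ℝ) : 0 ≤ stdNormalPDF z := by
  rw [stdNormalPDF_eq_gaussianPDFReal]
  exact gaussianPDFReal_nonneg 0 1 z

/-- g(z) = Γ_u(ν/2, ν(z+δ)²/(2x²))·φ(z) is integrable on (−δ, ∞) and its
integral equals F_{t_{ν,δ}}(x) − Φ(−δ) for x > 0. -/
theorem integrand_integrable_and_integral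
    {Ω : Type*} [MeasurableSpace Ω] (P : Measure Ω) [IsProbabilityMeasure P]
    (Z Q : Ω → ℝ) (hZ : Measurable Z) (hQ : Measurable Q)
    (ν δ : ℝ) (hν : 0 < ν)
    (hZlaw : Measure.map Z P = ProbabilityTheory.gaussianReal 0 1)
    (hQlaw : Measure.map Q P = ProbabilityTheory.gammaMeasure (ν / 2) (1 / 2))
    (hindep : ProbabilityTheory.IndepFun Z Q P)
    (x : ℝ) (hx : 0 < x) :
    MeasureTheory.IntegrableOn
      (fun z => upperRegGamma (ν / 2) (ν * (z + δ) ^ 2 / (2 * x ^ 2)) * stdNormalPDF z)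
      (Set.Ioi (-δ)) ∧
    ∫ z in Set.Ioi (-δ),
        upperRegGamma (ν / 2) (ν * (z + δ) ^ 2 / (2 * x ^ 2)) * stdNormalPDF z
      = (P {ω | (Z ω + δ) / Real.sqrt (Q ω / ν) ≤ x}).toReal - stdNormalCDF (-δ) := by
  have ha : 0 < ν / 2 := by linarith
  set a := ν / 2 with ha_def
  -- the argument function
  set q : ℝ → ℝ := fun z => ν * (z + δ) ^ 2 / (2 * x ^ 2) with hq_def
  have hq_nonneg : ∀ z, 0 ≤ q z := fun z => by positivity
  have hq_meas : Measurable q := by fun_prop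
  have hg_meas : Measurable (fun z => upperRegGamma a (q z)) := by
    have : (fun z => upperRegGamma a (q z))
        = (fun y => upperRegGamma a (max y 0)) ∘ q := by
      ext z
      simp [Function.comp, max_eq_left (hq_nonneg z)]
    rw [this]
    exact (measurable_upperRegGamma_max ha).comp hq_meas
  have hφ_meas : Measurable stdNormalPDF := by
    rw [stdNormalPDF_eq_gaussianPDFReal]; exact measurable_gaussianPDFReal 0 1
  have hφ_int : Integrable stdNormalPDF := by
    rw [stdNormalPDF_eq_gaussianPDFReal]; exact integrable_gaussianPDFReal 0 1
  -- Part 1: integrability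
  have hInt : MeasureTheory.IntegrableOn
      (fun z => upperRegGamma a (q z) * stdNormalPDF z) (Set.Ioi (-δ)) := by
    apply Integrable.mono hφ_int.restrict
      ((hg_meas.mul hφ_meas).aestronglyMeasurable.restrict)
    apply ae_of_all
    intro z
    rw [Real.norm_eq_abs, Real.norm_eq_abs, Pi.mul_apply,
      abs_of_nonneg (mul_nonneg (upperRegGamma_nonneg ha (hq_nonneg z)) (stdNormalPDF_nonneg z)),
      abs_of_nonneg (stdNormalPDF_nonneg z)]
    calc upperRegGamma a (q z) * stdNormalPDF z
        ≤ 1 * stdNormalPDF z := by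
          apply mul_le_mul_of_nonneg_right (upperRegGamma_le_one ha (hq_nonneg z))
            (stdNormalPDF_nonneg z)
      _ = stdNormalPDF z := one_mul _
  refine ⟨hInt, ?_⟩
  -- Part 2: the identity
  haveI : IsProbabilityMeasure (gammaMeasure a (1/2)) :=
    isProbabilityMeasure_gammaMeasure ha (by norm_num)
  -- joint law
  have hmap : Measure.map (fun ω => (Z ω, Q ω)) P
      = (gaussianReal 0 1).prod (gammaMeasure a (1/2)) := by
    rw [(ProbabilityTheory.indepFun_iff_map_prod_eq_prod_map_map
      hZ.aemeasurable hQ.aemeasurable).mp hindep, hZlaw, hQlaw]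
  have hS : MeasurableSet {p : ℝ × ℝ | (p.1 + δ) / Real.sqrt (p.2 / ν) ≤ x} := by
    apply measurableSet_le _ measurable_const
    fun_prop
  have hPE : P {ω | (Z ω + δ) / Real.sqrt (Q ω / ν) ≤ x}
      = ∫⁻ z, gammaMeasure a (1/2) {q' : ℝ | (z + δ) / Real.sqrt (q' / ν) ≤ x}
          ∂(gaussianReal 0 1) := by
    have : {ω | (Z ω + δ) / Real.sqrt (Q ω / ν) ≤ x}
        = (fun ω => (Z ω, Q ω)) ⁻¹' {p : ℝ × ℝ | (p.1 + δ) / Real.sqrt (p.2 / ν) ≤ x} := rfl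
    rw [this, ← Measure.map_apply (hZ.prodMk hQ) hS, hmap, Measure.prod_apply hS]
    simp only [Set.preimage_setOf_eq]
  -- compute slices
  have hslice : ∀ z : ℝ, gammaMeasure a (1/2) {q' : ℝ | (z + δ) / Real.sqrt (q' / ν) ≤ x}
      = if z ≤ -δ then 1 else ENNReal.ofReal (upperRegGamma a (q z)) := by
    intro z
    rcases le_or_gt z (-δ) with hz | hz
    · rw [if_pos hz, slice_eq_of_le hx hz, measure_univ]
    · rw [if_neg (not_le.mpr hz), slice_eq_of_gt hν hx hz]
      have hc : 0 < ν * (z + δ) ^ 2 / x ^ 2 := by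
        have : 0 < z + δ := by linarith
        positivity
      have h1 : gammaMeasure a (1/2) (Set.Iic 0 ∪ Set.Ici (ν * (z + δ) ^ 2 / x ^ 2))
          = gammaMeasure a (1/2) (Set.Ici (ν * (z + δ) ^ 2 / x ^ 2)) := by
        apply le_antisymm
        · calc gammaMeasure a (1/2) (Set.Iic 0 ∪ Set.Ici (ν * (z + δ) ^ 2 / x ^ 2))
              ≤ gammaMeasure a (1/2) (Set.Iic 0)
                + gammaMeasure a (1/2) (Set.Ici (ν * (z + δ) ^ 2 / x ^ 2)) := measure_union_le _ _
            _ = gammaMeasure a (1/2) (Set.Ici (ν * (z + δ) ^ 2 / x ^ 2)) := by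
                rw [gammaMeasure_Iic_zero, zero_add]
        · exact measure_mono subset_union_right
      rw [h1, gammaMeasure_tail ha hc]
      congr 1
      rw [hq_def]
      ring_nf
  simp only [hslice] at hPE
  -- split the lintegral
  have hsplit : (∫⁻ z, (if z ≤ -δ then 1 else ENNReal.ofReal (upperRegGamma a (q z)))
        ∂(gaussianReal 0 1))
      = (∫⁻ z in Set.Iic (-δ), (if z ≤ -δ then 1 else ENNReal.ofReal (upperRegGamma a (q z)))
          ∂(gaussianReal 0 1))
        + ∫⁻ z in Set.Ioi (-δ), (if z ≤ -δ then 1 else ENNReal.ofReal (upperRegGamma a (q z)))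
          ∂(gaussianReal 0 1) := by
    rw [← compl_Iic]
    exact (lintegral_add_compl _ measurableSet_Iic).symm
  have hleft : (∫⁻ z in Set.Iic (-δ),
        (if z ≤ -δ then 1 else ENNReal.ofReal (upperRegGamma a (q z))) ∂(gaussianReal 0 1))
      = ENNReal.ofReal (stdNormalCDF (-δ)) := by
    rw [setLIntegral_congr_fun_ae measurableSet_Iic
      (ae_of_all _ (fun z (hz : z ≤ -δ) => if_pos hz))]
    rw [setLIntegral_one, gaussianReal_apply_eq_integral 0 one_ne_zero,
      ← stdNormalPDF_eq_gaussianPDFReal]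
    rfl
  have hright : (∫⁻ z in Set.Ioi (-δ),
        (if z ≤ -δ then 1 else ENNReal.ofReal (upperRegGamma a (q z))) ∂(gaussianReal 0 1))
      = ENNReal.ofReal (∫ z in Set.Ioi (-δ), upperRegGamma a (q z) * stdNormalPDF z) := by
    rw [setLIntegral_congr_fun_ae measurableSet_Ioi
      (ae_of_all _ (fun z (hz : z ∈ Set.Ioi (-δ)) => if_neg (not_le.mpr hz)))]
    rw [gaussianReal_of_var_ne_zero 0 one_ne_zero, restrict_withDensity measurableSet_Ioi,
      lintegral_withDensity_eq_lintegral_mul _ (measurable_gaussianPDF 0 1)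
        (hg_meas.ennreal_ofReal)]
    rw [setLIntegral_congr_fun_ae measurableSet_Ioi (ae_of_all _ (fun z _ => by
      simp only [Pi.mul_apply, gaussianPDF, ← stdNormalPDF_eq_gaussianPDFReal]
      rw [← ENNReal.ofReal_mul (stdNormalPDF_nonneg z), mul_comm (stdNormalPDF z)]))]
    rw [← ofReal_integral_eq_lintegral_ofReal hInt
      (ae_of_all _ (fun z => mul_nonneg (upperRegGamma_nonneg ha (hq_nonneg z))
        (stdNormalPDF_nonneg z)))]
  rw [hPE, hsplit, hleft, hright]
  have hCDFnonneg : 0 ≤ stdNormalCDF (-δ) :=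
    setIntegral_nonneg measurableSet_Iic (fun z _ => stdNormalPDF_nonneg z)
  have hInonneg : 0 ≤ ∫ z in Set.Ioi (-δ), upperRegGamma a (q z) * stdNormalPDF z :=
    setIntegral_nonneg measurableSet_Ioi (fun z _ =>
      mul_nonneg (upperRegGamma_nonneg ha (hq_nonneg z)) (stdNormalPDF_nonneg z))
  rw [ENNReal.toReal_add ENNReal.ofReal_ne_top ENNReal.ofReal_ne_top,
    ENNReal.toReal_ofReal hCDFnonneg, ENNReal.toReal_ofReal hInonneg]
  ring
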